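/- Euler-type criterion for general cubics: let K be a global field with char ≠ 2,3 (or Q), f(x) = x^3 + bx + c separable over the residue field F_q at a prime p not dividing 3b(4b^3+27c^2) (and not dividing the denominators of b, c), and let T = Tr_{F_q[x]/(f) / F_q}(x^{q+1}). Then: T ≡ −2b iff f has 3 roots in F_q; T ≡ b iff f is irreducible over F_q; and T is a root of X^3 − 3b^2 X − 2b^3 − 27c^2 iff f has exactly 1 root in F_q. -/

import Mathlib

open Polynomial

set_option linter.unusedSectionVars false
set_option maxHeartbeats 1000000

section AuxEuler

variable {Fq : Type*} [Field Fq] [Fintype Fq]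


/-- `X^q - X` as product over all field elements. -/
lemma aux_prod_univ : (X ^ Fintype.card Fq - X : Fq[X]) =
    ((Finset.univ.val : Multiset Fq).map (fun a => X - C a)).prod := by
  set q := Fintype.card Fq with hq
  have h1 : (1 : ℕ) < q := Fintype.one_lt_card
  have hnd : (X ^ q - X : Fq[X]).natDegree = q :=
    FiniteField.X_pow_card_sub_X_natDegree_eq Fq h1
  have hroots : (X ^ q - X : Fq[X]).roots = Finset.univ.val :=
    FiniteField.roots_X_pow_card_sub_X Fq
  have hlc : (X ^ q - X : Fq[X]).leadingCoeff = 1 := by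
    rw [Polynomial.leadingCoeff, hnd, coeff_sub, coeff_X_pow, coeff_X, if_pos rfl,
      if_neg (Nat.ne_of_lt h1), sub_zero]
  refine (Polynomial.eq_of_dvd_of_natDegree_le_of_leadingCoeff ?_ ?_ ?_).symm
  · rw [← hroots]; exact Polynomial.prod_multiset_X_sub_C_dvd _
  · rw [hnd, ← hroots, Polynomial.natDegree_multiset_prod_X_sub_C_eq_card, hroots]
    simp [hq]
  · rw [hlc, ← hroots]
    exact Polynomial.monic_multisetProd_X_sub_C _

/-- the root of an irreducible polynomial of degree ≥ 2 is not fixed by x ↦ x^q -/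
lemma aux_root_pow_ne (g : Fq[X]) (hirr : Irreducible g) (hdeg : 2 ≤ g.natDegree) :
    (AdjoinRoot.root g) ^ Fintype.card Fq ≠ AdjoinRoot.root g := by
  intro h
  have hdvd : g ∣ X ^ Fintype.card Fq - X := by
    rw [← AdjoinRoot.mk_eq_zero]
    rw [map_sub, map_pow, AdjoinRoot.mk_X, h, sub_self]
  rw [aux_prod_univ] at hdvd
  have hp : Prime g := hirr.prime
  obtain ⟨a, ha, hga⟩ := hp.exists_mem_multiset_dvd hdvd
  obtain ⟨a', -, rfl⟩ := Multiset.mem_map.mp ha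
  have := Polynomial.natDegree_le_of_dvd hga (X_sub_C_ne_zero a')
  rw [natDegree_X_sub_C] at this
  omega

/-- Frobenius preserves roots of polynomials over Fq -/
lemma aux_aeval_pow {A : Type*} [Field A] [Algebra Fq A] (g : Fq[X]) (x : A)
    (hx : aeval x g = 0) : aeval (x ^ Fintype.card Fq) g = 0 := by
  set p := ringChar Fq with hpdef
  obtain ⟨n, hp, hq⟩ := FiniteField.card Fq p
  haveI : Fact p.Prime := ⟨hp⟩
  haveI : CharP A p := charP_of_injective_algebraMap (algebraMap Fq A).injective p
  have hcomp : (iterateFrobenius A p n).comp (algebraMap Fq A) = algebraMap Fq A := by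
    ext a
    rw [RingHom.comp_apply, iterateFrobenius_def, ← map_pow, ← hq, FiniteField.pow_card]
  have key : (x ^ Fintype.card Fq) = iterateFrobenius A p n x := by
    rw [iterateFrobenius_def, hq]
  rw [key, Polynomial.aeval_def, ← hcomp, ← Polynomial.hom_eval₂, ← Polynomial.aeval_def,
    hx, map_zero]

lemma aux_deg_lin (b c : Fq) : (C b * X + C c).degree < 3 :=
  lt_of_le_of_lt Polynomial.degree_linear_le (by decide)

lemma aux_natDegree (b c : Fq) : (X ^ 3 + C b * X + C c).natDegree = 3 := by
  have h : (X ^ 3 + C b * X + C c : Fq[X]) = X ^ 3 + (C b * X + C c) := by ring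
  rw [h, Polynomial.natDegree_add_eq_left_of_degree_lt, natDegree_X_pow]
  rw [degree_X_pow]
  exact aux_deg_lin b c

lemma aux_monic (b c : Fq) : (X ^ 3 + C b * X + C c).Monic := by
  have h : (X ^ 3 + C b * X + C c : Fq[X]) = X ^ 3 + (C b * X + C c) := by ring
  rw [h]
  exact Polynomial.monic_X_pow_add (aux_deg_lin b c)

lemma aux_trace_sq (b c : Fq) (f : Fq[X]) (hf : f = X ^ 3 + C b * X + C c) :
    Algebra.trace Fq (AdjoinRoot f) (AdjoinRoot.root f ^ 2) = -2 * b := by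
  have hm : f.Monic := hf ▸ aux_monic b c
  have hnd : f.natDegree = 3 := hf ▸ aux_natDegree b c
  have hdeg : f.degree = 3 := by
    rw [Polynomial.degree_eq_natDegree hm.ne_zero, hnd]; rfl
  classical
  have hmod : ∀ s r : Fq[X], r.degree < 3 → (f * s + r) %ₘ f = r := by
    intro s r hr
    rw [Polynomial.add_modByMonic, Polynomial.self_mul_modByMonic hm, zero_add,
      (Polynomial.modByMonic_eq_self_iff hm).mpr (hdeg ▸ hr)]
  have pb := AdjoinRoot.powerBasis' hm
  rw [Algebra.trace_eq_matrix_trace (AdjoinRoot.powerBasisAux' hm)]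
  rw [Matrix.trace]
  have hdiag : ∀ i : Fin f.natDegree,
      (Algebra.leftMulMatrix (AdjoinRoot.powerBasisAux' hm) (AdjoinRoot.root f ^ 2)).diag i
        = ((X ^ (2 + (i : ℕ)) : Fq[X]) %ₘ f).coeff i := by
    intro i
    rw [Matrix.diag, Algebra.leftMulMatrix_eq_repr_mul]
    have hbi : (AdjoinRoot.powerBasisAux' hm) i = AdjoinRoot.root f ^ (i : ℕ) :=
      (AdjoinRoot.powerBasis' hm).basis_eq_pow i
    rw [hbi, ← pow_add]
    have : AdjoinRoot.root f ^ (2 + (i : ℕ)) = AdjoinRoot.mk f (X ^ (2 + (i : ℕ))) := by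
      rw [map_pow, AdjoinRoot.mk_X]
    rw [this, AdjoinRoot.powerBasisAux'_repr_apply_to_fun, AdjoinRoot.modByMonicHom_mk]
  rw [Finset.sum_congr rfl (fun i _ => hdiag i)]
  rw [Fin.sum_univ_eq_sum_range (fun i => ((X ^ (2 + i) : Fq[X]) %ₘ f).coeff i), hnd]
  have h0 : ((X ^ 2 : Fq[X]) %ₘ f) = X ^ 2 := by
    have := hmod 0 (X ^ 2) (by rw [degree_X_pow]; decide)
    rwa [mul_zero, zero_add] at this
  have h1 : ((X ^ 3 : Fq[X]) %ₘ f) = -(C b * X) - C c := by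
    have he : (X ^ 3 : Fq[X]) = f * 1 + (-(C b * X) - C c) := by rw [hf]; ring
    rw [he, hmod]
    have : (-(C b * X) - C c : Fq[X]) = C (-b) * X + C (-c) := by
      simp [map_neg]; ring
    rw [this]
    exact lt_of_le_of_lt Polynomial.degree_linear_le (by decide)
  have h2 : ((X ^ 4 : Fq[X]) %ₘ f) = -(C b * X ^ 2) - C c * X := by
    have he : (X ^ 4 : Fq[X]) = f * X + (-(C b * X ^ 2) - C c * X) := by rw [hf]; ring
    rw [he, hmod]
    have : (-(C b * X ^ 2) - C c * X : Fq[X]) = C (-b) * X ^ 2 + C (-c) * X + C 0 := by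
      simp [map_neg]; ring
    rw [this]
    exact lt_of_le_of_lt Polynomial.degree_quadratic_le (by decide)
  rw [Finset.sum_range_succ, Finset.sum_range_succ, Finset.sum_range_one]
  norm_num [h0, h1, h2]
  ring

lemma aux_finrank (b c : Fq) (f : Fq[X]) (hf : f = X ^ 3 + C b * X + C c) :
    Module.finrank Fq (AdjoinRoot f) = 3 := by
  have hm : f.Monic := hf ▸ aux_monic b c
  rw [(AdjoinRoot.powerBasis' hm).finrank, AdjoinRoot.powerBasis'_dim, hf, aux_natDegree]

lemma aux_trace_one (b c : Fq) (f : Fq[X]) (hf : f = X ^ 3 + C b * X + C c) :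
    Algebra.trace Fq (AdjoinRoot f) 1 = 3 := by
  have h := Algebra.trace_algebraMap (R := Fq) (S := AdjoinRoot f) 1
  rw [map_one, aux_finrank b c f hf] at h
  rw [h]; norm_num

lemma aux_trace_root (b c : Fq) (f : Fq[X]) (hf : f = X ^ 3 + C b * X + C c) :
    Algebra.trace Fq (AdjoinRoot f) (AdjoinRoot.root f) = 0 := by
  have hm : f.Monic := hf ▸ aux_monic b c
  have hnd : f.natDegree = 3 := hf ▸ aux_natDegree b c
  have hnz : f ≠ 0 := hm.ne_zero
  haveI : Nontrivial (AdjoinRoot f) := AdjoinRoot.nontrivial f (by rw [Polynomial.degree_eq_natDegree hnz, hnd]; decide)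
  have h := (AdjoinRoot.powerBasis' hm).trace_gen_eq_nextCoeff_minpoly
  rw [AdjoinRoot.powerBasis'_gen] at h
  rw [h, AdjoinRoot.minpoly_root hnz, hm.leadingCoeff, inv_one, map_one, mul_one]
  rw [Polynomial.nextCoeff_of_natDegree_pos (by omega), hnd]
  rw [hf]
  simp [coeff_X, coeff_C]

lemma aux_trace_mk (b c : Fq) (f : Fq[X]) (hf : f = X ^ 3 + C b * X + C c) (u v w : Fq) :
    Algebra.trace Fq (AdjoinRoot f) (AdjoinRoot.mk f (C u + C v * X + C w * X ^ 2))
      = 3 * u - 2 * b * w := by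
  have hsplit : (AdjoinRoot.mk f (C u + C v * X + C w * X ^ 2) : AdjoinRoot f)
      = u • (1 : AdjoinRoot f) + v • AdjoinRoot.root f + w • (AdjoinRoot.root f ^ 2) := by
    rw [map_add, map_add, map_mul, map_mul, map_pow, AdjoinRoot.mk_X, AdjoinRoot.mk_C,
      AdjoinRoot.mk_C, AdjoinRoot.mk_C]
    rw [Algebra.smul_def, Algebra.smul_def, Algebra.smul_def]
    simp only [AdjoinRoot.algebraMap_eq, mul_one]
  rw [hsplit, map_add, map_add, LinearMap.map_smul, LinearMap.map_smul, LinearMap.map_smul,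
    aux_trace_one b c f hf, aux_trace_root b c f hf, aux_trace_sq b c f hf]
  simp only [smul_eq_mul]
  ring

lemma aux_tri (b c : Fq) (f : Fq[X]) (hf : f = X ^ 3 + C b * X + C c) :
    Multiset.card f.roots = 3 ∨ Irreducible f ∨ Multiset.card f.roots = 1 := by
  have hm : f.Monic := hf ▸ aux_monic b c
  have hnd : f.natDegree = 3 := hf ▸ aux_natDegree b c
  have hcard : Multiset.card f.roots ≤ 3 := hnd ▸ Polynomial.card_roots' f
  have hnot2 : Multiset.card f.roots ≠ 2 := by
    intro h2
    obtain ⟨u, hu⟩ := Polynomial.prod_multiset_X_sub_C_dvd f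
    have hP : (f.roots.map fun a => X - C a).prod.Monic := Polynomial.monic_multisetProd_X_sub_C _
    have hPd : (f.roots.map fun a => X - C a).prod.natDegree = 2 := by
      rw [Polynomial.natDegree_multiset_prod_X_sub_C_eq_card, h2]
    have hu0 : u ≠ 0 := by
      intro h; rw [h, mul_zero] at hu; exact hm.ne_zero hu
    have hud : u.natDegree = 1 := by
      have := Polynomial.natDegree_mul hP.ne_zero hu0
      rw [← hu, hnd, hPd] at this
      omega
    have hum : u.Monic := by
      have := hm
      rw [hu] at this
      exact hP.of_mul_monic_left this
    have ha : u = X + C (u.coeff 0) := hum.eq_X_add_C hud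
    set a := u.coeff 0
    have hru : u.roots = {-a} := by
      rw [ha, ← sub_neg_eq_add, ← Polynomial.C_neg, Polynomial.roots_X_sub_C]
    have : f.roots = f.roots + {-a} := by
      conv_lhs => rw [hu]
      rw [Polynomial.roots_mul (hu ▸ hm.ne_zero), Polynomial.roots_multiset_prod_X_sub_C, hru]
    have := congrArg Multiset.card this
    simp at this
  interval_cases h : Multiset.card f.roots
  · right; left
    rw [hm.irreducible_iff_roots_eq_zero_of_degree_le_three (by omega) (by omega)]
    exact Multiset.card_eq_zero.mp h
  · right; right; rfl
  · exact absurd rfl hnot2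
  · left; rfl

lemma aux_case3 (b c : Fq) (f : Fq[X]) (hf : f = X ^ 3 + C b * X + C c)
    (hsep : f.Separable) (h3 : Multiset.card f.roots = 3) :
    Algebra.trace Fq (AdjoinRoot f) (AdjoinRoot.root f ^ (Fintype.card Fq + 1)) = -2 * b := by
  have hm : f.Monic := hf ▸ aux_monic b c
  have hnd : f.natDegree = 3 := hf ▸ aux_natDegree b c
  classical
  -- f = product of its roots
  have hfP : (f.roots.map fun a => X - C a).prod = f := by
    apply Polynomial.eq_of_dvd_of_natDegree_le_of_leadingCoeff
      (Polynomial.prod_multiset_X_sub_C_dvd f)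
    · rw [Polynomial.natDegree_multiset_prod_X_sub_C_eq_card, h3, hnd]
    · rw [Polynomial.monic_multisetProd_X_sub_C, hm]
  -- f divides X^q - X
  have hle : f.roots ≤ (Finset.univ.val : Multiset Fq) := by
    rw [Multiset.le_iff_count]
    intro a
    by_cases ha : a ∈ f.roots
    · calc Multiset.count a f.roots ≤ 1 :=
        (Multiset.nodup_iff_count_le_one.mp (Polynomial.nodup_roots hsep)) a
      _ ≤ Multiset.count a Finset.univ.val := by
          rw [Multiset.count_eq_one_of_mem Finset.univ.nodup (Finset.mem_univ_val a)]
    · rw [Multiset.count_eq_zero_of_notMem ha]; omega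
  have hdvd : f ∣ X ^ Fintype.card Fq - X := by
    rw [aux_prod_univ, ← hfP]
    exact Multiset.prod_dvd_prod_of_le (Multiset.map_le_map hle)
  have hroot : AdjoinRoot.root f ^ Fintype.card Fq = AdjoinRoot.root f := by
    have h0 := AdjoinRoot.mk_eq_zero.mpr hdvd
    rw [map_sub, map_pow, AdjoinRoot.mk_X, sub_eq_zero] at h0
    exact h0
  have : AdjoinRoot.root f ^ (Fintype.card Fq + 1)
      = AdjoinRoot.mk f (C 0 + C 0 * X + C 1 * X ^ 2) := by
    rw [pow_succ, hroot, map_add, map_add]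
    simp [← AdjoinRoot.mk_X, ← map_pow, sq]
  rw [this, aux_trace_mk b c f hf]
  ring

lemma aux_case1 (b c : Fq) (f : Fq[X]) (hf : f = X ^ 3 + C b * X + C c)
    (hsep : f.Separable) (h1 : Multiset.card f.roots = 1) :
    ∃ r : Fq, r ^ 3 + b * r + c = 0 ∧
      Algebra.trace Fq (AdjoinRoot f) (AdjoinRoot.root f ^ (Fintype.card Fq + 1))
        = 3 * r ^ 2 + 2 * b := by
  classical
  have hm : f.Monic := hf ▸ aux_monic b c
  have hnd : f.natDegree = 3 := hf ▸ aux_natDegree b c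
  obtain ⟨r, hroots⟩ := Multiset.card_eq_one.mp h1
  have hrmem : r ∈ f.roots := by rw [hroots]; exact Multiset.mem_singleton_self r
  have hr0 : f.eval r = 0 := (Polynomial.mem_roots hm.ne_zero).mp hrmem
  have hr : r ^ 3 + b * r + c = 0 := by
    rw [hf] at hr0; simpa using hr0
  refine ⟨r, hr, ?_⟩
  -- derivative nonzero at r
  have hder : 3 * r ^ 2 + b ≠ 0 := by
    obtain ⟨A1, B1, hAB⟩ := hsep
    intro hz
    have hd : f.derivative = C 3 * X ^ 2 + C b := by
      rw [hf]
      simp only [derivative_add, derivative_X_pow, derivative_mul, derivative_C, derivative_X]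
      push_cast
      ring
    have := congrArg (Polynomial.eval r) hAB
    rw [Polynomial.eval_add, Polynomial.eval_mul, Polynomial.eval_mul, hr0, hd] at this
    simp at this
    rw [show (3 : Fq) * r ^ 2 + b = 0 from hz] at this
    simp at this
  set d : Fq := r ^ 2 + b with hd
  set g' : Fq[X] := X ^ 2 + C r * X + C d with hg'
  have hg'm : g'.Monic := by
    rw [hg', add_assoc]
    apply Polynomial.monic_X_pow_add
    exact lt_of_le_of_lt Polynomial.degree_linear_le (by decide)
  have hg'nd : g'.natDegree = 2 := by
    rw [hg', add_assoc, Polynomial.natDegree_add_eq_left_of_degree_lt, natDegree_X_pow]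
    rw [degree_X_pow]
    exact lt_of_le_of_lt Polynomial.degree_linear_le (by decide)
  have hfact : f = (X - C r) * g' := by
    rw [hf, hg', hd]
    have hc : c = -(r ^ 3) - b * r := by linear_combination hr
    rw [hc]
    simp only [map_add, map_mul, map_sub, map_neg, map_pow]
    ring
  have hg'r : g'.eval r = 3 * r ^ 2 + b := by
    rw [hg', hd]; simp; ring
  have hg'roots : g'.roots = 0 := by
    have hfr : f.roots = {r} + g'.roots := by
      rw [hfact, Polynomial.roots_mul (hfact ▸ hm.ne_zero), Polynomial.roots_X_sub_C]
    have := congrArg Multiset.card hfr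
    rw [hroots] at this
    simp at this
    simpa using this
  have hg'irr : Irreducible g' :=
    (hg'm.irreducible_iff_roots_eq_zero_of_degree_le_three (by omega) (by omega)).mpr hg'roots
  -- work in K = AdjoinRoot g'
  haveI : Fact (Irreducible g') := ⟨hg'irr⟩
  set K := AdjoinRoot g'
  set β : K := AdjoinRoot.root g' with hβ
  set q := Fintype.card Fq with hq
  have hag : aeval β g' = 0 := by rw [AdjoinRoot.aeval_eq, AdjoinRoot.mk_self]
  have hβeq : β ^ 2 + algebraMap Fq K r * β + algebraMap Fq K d = 0 := by
    have h0' : aeval β (X ^ 2 + C r * X + C d) = 0 :=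
      (congrArg (aeval β) hg').symm.trans hag
    simpa [map_add, map_mul, map_pow] using h0'
  have hy : (β ^ q) ^ 2 + algebraMap Fq K r * β ^ q + algebraMap Fq K d = 0 := by
    have h1' := aux_aeval_pow g' β hag
    have h1'' : aeval (β ^ q) (X ^ 2 + C r * X + C d) = 0 :=
      (congrArg (aeval (β ^ q)) hg').symm.trans h1'
    simpa [map_add, map_mul, map_pow] using h1''
  have hfac : (β ^ q - β) * (β ^ q - (-(algebraMap Fq K r) - β)) = 0 := by
    linear_combination hy - hβeq
  have hβq : β ^ q = -(algebraMap Fq K r) - β := by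
    rcases mul_eq_zero.mp hfac with h | h
    · exact absurd (sub_eq_zero.mp h) (aux_root_pow_ne g' hg'irr (by omega))
    · exact sub_eq_zero.mp h
  have hnorm : β ^ (q + 1) = algebraMap Fq K d := by
    rw [pow_succ, hβq]
    linear_combination (-1 : K) * hβeq
  have hminp : minpoly Fq β = g' := by
    rw [hβ, AdjoinRoot.minpoly_root hg'm.ne_zero, hg'm.leadingCoeff, inv_one, map_one, mul_one]
  have hg'dvd : g' ∣ (X ^ (q + 1) - C d : Fq[X]) := by
    rw [← hminp]
    apply minpoly.dvd
    rw [map_sub, map_pow, aeval_X, aeval_C, hnorm, sub_self]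
  -- the remainder polynomial
  set s : Fq := -b / (3 * r ^ 2 + b) with hs
  set pp : Fq[X] := C (d + s * d) + C (s * r) * X + C s * X ^ 2 with hpp
  have hppg : pp = C d + C s * g' := by
    rw [hpp, hg']
    simp only [map_add, map_mul, map_pow]
    ring
  have hdvd1 : (X - C r) ∣ (X ^ (q + 1) - pp : Fq[X]) := by
    rw [Polynomial.dvd_iff_isRoot]
    have hrq : r ^ (q + 1) = r ^ 2 := by
      rw [pow_succ, hq, FiniteField.pow_card, sq]
    simp only [Polynomial.IsRoot, Polynomial.eval_sub, Polynomial.eval_pow, Polynomial.eval_X,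
      hpp, Polynomial.eval_add, Polynomial.eval_mul, Polynomial.eval_C, hrq]
    rw [hs, hd]
    field_simp
    linear_combination b * (inv_mul_cancel₀ (show r ^ 2 * 3 + b ≠ 0 by rw [mul_comm]; exact hder))
  have hdvd2 : g' ∣ (X ^ (q + 1) - pp : Fq[X]) := by
    have : (X ^ (q + 1) - pp : Fq[X]) = (X ^ (q + 1) - C d) - C s * g' := by
      rw [hppg]; ring
    rw [this]
    exact dvd_sub hg'dvd (Dvd.intro_left _ rfl)
  have hcop : IsCoprime (X - C r) g' := by
    apply (Polynomial.prime_X_sub_C r).coprime_iff_not_dvd.mpr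
    rw [Polynomial.dvd_iff_isRoot]
    intro h
    rw [Polynomial.IsRoot, hg'r] at h
    exact hder h
  have hfdvd : f ∣ (X ^ (q + 1) - pp : Fq[X]) := by
    rw [hfact]
    exact hcop.mul_dvd hdvd1 hdvd2
  have hroot : AdjoinRoot.root f ^ (q + 1) = AdjoinRoot.mk f pp := by
    have h0 := AdjoinRoot.mk_eq_zero.mpr hfdvd
    rw [map_sub, map_pow, AdjoinRoot.mk_X, sub_eq_zero] at h0
    exact h0
  rw [hroot, hpp, aux_trace_mk b c f hf]
  rw [hs, hd]
  field_simp
  ring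

lemma aux_caseI (b c : Fq) (f : Fq[X]) (hf : f = X ^ 3 + C b * X + C c)
    (hirr : Irreducible f) :
    Algebra.trace Fq (AdjoinRoot f) (AdjoinRoot.root f ^ (Fintype.card Fq + 1)) = b := by
  classical
  have hm : f.Monic := hf ▸ aux_monic b c
  have hnd : f.natDegree = 3 := hf ▸ aux_natDegree b c
  haveI : Fact (Irreducible f) := ⟨hirr⟩
  set q := Fintype.card Fq with hq
  set A := AdjoinRoot f
  set α : A := AdjoinRoot.root f with hα
  haveI : FiniteDimensional Fq A :=
    Module.Finite.of_basis (AdjoinRoot.powerBasis' hm).basis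
  haveI : Fintype A := Module.fintypeOfFintype (AdjoinRoot.powerBasis' hm).basis
  have hcardA : Fintype.card A = q ^ 3 := by
    rw [Module.card_fintype (AdjoinRoot.powerBasis' hm).basis]
    congr 1
    rw [Fintype.card_fin, AdjoinRoot.powerBasis'_dim, hnd]
  -- the Frobenius as an algebra equivalence
  obtain ⟨n, hp, hqc⟩ := FiniteField.card Fq (ringChar Fq)
  haveI : Fact (ringChar Fq).Prime := ⟨hp⟩
  haveI : CharP A (ringChar Fq) :=
    charP_of_injective_algebraMap (algebraMap Fq A).injective (ringChar Fq)
  have hfrobq : ∀ x : A, iterateFrobenius A (ringChar Fq) n x = x ^ q := by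
    intro x; rw [iterateFrobenius_def, hq, hqc]
  have hcomm : ∀ a : Fq, iterateFrobenius A (ringChar Fq) n (algebraMap Fq A a)
      = algebraMap Fq A a := by
    intro a
    rw [hfrobq, ← map_pow, hq, FiniteField.pow_card]
  set F : A →ₐ[Fq] A := AlgHom.mk' (iterateFrobenius A (ringChar Fq) n)
    (fun m x => by simp [Algebra.smul_def, map_mul, hcomm m]) with hF
  have hFapply : ∀ x : A, F x = x ^ q := fun x => hfrobq x
  have hFbij : Function.Bijective F :=
    (Finite.injective_iff_bijective).mp (F.toRingHom.injective)
  set φ : A ≃ₐ[Fq] A := AlgEquiv.ofBijective F hFbij with hφ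
  have hφapply : ∀ x : A, φ x = x ^ q := hFapply
  -- the Galois group
  have hcardG : Fintype.card (A ≃ₐ[Fq] A) = 3 := by
    rw [← Nat.card_eq_fintype_card, IsGalois.card_aut_eq_finrank, aux_finrank b c f hf]
  have hφne : φ ≠ 1 := by
    intro h
    have := hφapply α
    rw [h] at this
    exact aux_root_pow_ne f hirr (by omega) (by simpa using this.symm)
  have hφsq_ne : φ ^ 2 ≠ 1 := by
    intro h
    have h1 : orderOf φ ∣ 2 := orderOf_dvd_of_pow_eq_one h
    have h2 : orderOf φ ∣ 3 := hcardG ▸ orderOf_dvd_card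
    have : orderOf φ = 1 := Nat.eq_one_of_dvd_coprimes (by norm_num) h1 h2
    exact hφne (orderOf_eq_one_iff.mp this)
  have hφsq_ne' : φ ^ 2 ≠ φ := by
    intro h
    apply hφne
    rw [sq] at h
    exact mul_left_cancel (h.trans (mul_one φ).symm)
  -- the universe of automorphisms
  have huniv : (Finset.univ : Finset (A ≃ₐ[Fq] A)) = {1, φ, φ ^ 2} := by
    symm
    apply Finset.eq_univ_of_card
    rw [hcardG]
    rw [Finset.card_insert_of_notMem (by simp [Ne.symm hφne, Ne.symm hφsq_ne]),
      Finset.card_insert_of_notMem (by simp [Ne.symm hφsq_ne']), Finset.card_singleton]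
  -- trace as sum over automorphisms
  have htr := trace_eq_sum_automorphisms (K := Fq) (α ^ (q + 1))
  rw [huniv] at htr
  rw [Finset.sum_insert (by simp [Ne.symm hφne, Ne.symm hφsq_ne]),
    Finset.sum_insert (by simp [Ne.symm hφsq_ne']), Finset.sum_singleton] at htr
  -- the three roots
  set β : A := α ^ q with hβ
  set γ : A := β ^ q with hγ
  have hγq : γ ^ q = α := by
    have hqq : q * (q * q) = Fintype.card A := by rw [hcardA]; ring
    rw [hγ, hβ, ← pow_mul, ← pow_mul, hqq]
    exact FiniteField.pow_card α
  have e1 : (1 : A ≃ₐ[Fq] A) (α ^ (q + 1)) = β * α := by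
    rw [AlgEquiv.one_apply, pow_succ, hβ]
  have e2 : φ (α ^ (q + 1)) = γ * β := by
    rw [hφapply, ← pow_mul, mul_comm (q + 1) q, pow_mul, pow_succ, hγ, hβ]
  have e3 : φ (φ (α ^ (q + 1))) = α * γ := by
    rw [e2, hφapply, mul_pow, hγq]
  have hsum : algebraMap Fq A (Algebra.trace Fq A (α ^ (q + 1))) = β * α + γ * β + α * γ := by
    rw [htr, e1, e2]
    have : (φ ^ 2) (α ^ (q + 1)) = φ (φ (α ^ (q + 1))) := by
      rw [sq, AlgEquiv.mul_apply]
    rw [this, e3]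
    ring
  -- β and γ are roots of f
  have hαroot : aeval α f = 0 := by rw [hα, AdjoinRoot.aeval_eq, AdjoinRoot.mk_self]
  have hβroot : aeval β f = 0 := aux_aeval_pow f α hαroot
  have hγroot : aeval γ f = 0 := aux_aeval_pow f β hβroot
  -- distinctness
  have hβα : β ≠ α := aux_root_pow_ne f hirr (by omega)
  have hγβ : γ ≠ β := by
    intro h
    exact hβα (φ.injective (by rw [hφapply, hφapply, ← hβ, ← hγ, h]))
  have hγα : γ ≠ α := by
    intro h
    apply hφsq_ne
    have hAA : (φ ^ 2).toAlgHom = (1 : A ≃ₐ[Fq] A).toAlgHom := by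
      apply AdjoinRoot.algHom_ext
      show (φ ^ 2) (AdjoinRoot.root f) = (1 : A ≃ₐ[Fq] A) (AdjoinRoot.root f)
      rw [sq, AlgEquiv.mul_apply, AlgEquiv.one_apply]
      rw [show φ (AdjoinRoot.root f) = β from hφapply α, show φ β = γ from hφapply β]
      exact h
    exact AlgEquiv.coe_algHom_injective hAA
  -- factor f over A
  have hdvd1 : (X - C α) ∣ f.map (algebraMap Fq A) := by
    rw [Polynomial.dvd_iff_isRoot, Polynomial.IsRoot, Polynomial.eval_map, ← Polynomial.aeval_def]
    exact hαroot
  have hdvd2 : (X - C β) ∣ f.map (algebraMap Fq A) := by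
    rw [Polynomial.dvd_iff_isRoot, Polynomial.IsRoot, Polynomial.eval_map, ← Polynomial.aeval_def]
    exact hβroot
  have hdvd3 : (X - C γ) ∣ f.map (algebraMap Fq A) := by
    rw [Polynomial.dvd_iff_isRoot, Polynomial.IsRoot, Polynomial.eval_map, ← Polynomial.aeval_def]
    exact hγroot
  have hcop12 : IsCoprime (X - C α) (X - C β : A[X]) :=
    Polynomial.isCoprime_X_sub_C_of_isUnit_sub (sub_ne_zero.mpr (Ne.symm hβα)).isUnit
  have hcop13 : IsCoprime (X - C α) (X - C γ : A[X]) :=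
    Polynomial.isCoprime_X_sub_C_of_isUnit_sub (sub_ne_zero.mpr (Ne.symm hγα)).isUnit
  have hcop23 : IsCoprime (X - C β) (X - C γ : A[X]) :=
    Polynomial.isCoprime_X_sub_C_of_isUnit_sub (sub_ne_zero.mpr (Ne.symm hγβ)).isUnit
  have hdvd : (X - C α) * ((X - C β) * (X - C γ)) ∣ f.map (algebraMap Fq A) :=
    (hcop12.mul_right hcop13).mul_dvd hdvd1 (hcop23.mul_dvd hdvd2 hdvd3)
  have heq : (X - C α) * ((X - C β) * (X - C γ)) = f.map (algebraMap Fq A) := by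
    apply Polynomial.eq_of_dvd_of_natDegree_le_of_leadingCoeff hdvd
    · rw [Polynomial.natDegree_map, hnd]
      rw [Polynomial.natDegree_mul (Polynomial.X_sub_C_ne_zero α)
        (mul_ne_zero (Polynomial.X_sub_C_ne_zero β) (Polynomial.X_sub_C_ne_zero γ)),
        Polynomial.natDegree_mul (Polynomial.X_sub_C_ne_zero β)
        (Polynomial.X_sub_C_ne_zero γ)]
      simp [natDegree_X_sub_C]
    · rw [((Polynomial.monic_X_sub_C α).mul
        ((Polynomial.monic_X_sub_C β).mul (Polynomial.monic_X_sub_C γ))).leadingCoeff,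
        (hm.map (algebraMap Fq A)).leadingCoeff]
  -- compare coefficients of X
  have hexp : (X - C α) * ((X - C β) * (X - C γ))
      = X ^ 3 - C (α + β + γ) * X ^ 2 + C (α * β + β * γ + γ * α) * X - C (α * β * γ) := by
    simp only [map_add, map_mul]
    ring
  have hc1 : f.coeff 1 = b := by
    rw [hf]
    simp [coeff_X, coeff_C]
  have hcoeff : (f.map (algebraMap Fq A)).coeff 1 = algebraMap Fq A b := by
    rw [Polynomial.coeff_map, hc1]
  have hb : α * β + β * γ + γ * α = algebraMap Fq A b := by
    have := congrArg (fun P : A[X] => P.coeff 1) (hexp.symm.trans heq)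
    rw [hcoeff] at this
    rw [← this]
    simp only [Polynomial.coeff_sub, Polynomial.coeff_add, Polynomial.coeff_C_mul,
      Polynomial.coeff_X_pow, Polynomial.coeff_C, Polynomial.coeff_X_one]
    norm_num
  -- conclude
  apply (algebraMap Fq A).injective
  rw [hsum, ← hb]
  ring

end AuxEuler

/-- Euler-type criterion for cubics: for `f = x³ + bx + c` over the finite field
`F_q` with `3b(4b³+27c²) ≠ 0`, and `T = Tr_{F_q[x]/(f)/F_q}(x^{q+1})`:
`T = −2b` iff `f` has 3 roots in `F_q`; `T = b` iff `f` is irreducible; and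
`T³ − 3b²T − 2b³ − 27c² = 0` iff `f` has exactly one root in `F_q`. -/
theorem stmt19 (Fq : Type*) [Field Fq] [Fintype Fq] (b c : Fq)
    (f : Polynomial Fq)
    (hf : f = Polynomial.X ^ 3 + Polynomial.C b * Polynomial.X + Polynomial.C c)
    (hsep : f.Separable)
    (hcond : (3 : Fq) * b * (4 * b ^ 3 + 27 * c ^ 2) ≠ 0) :
    ((Algebra.trace Fq (AdjoinRoot f)
        (AdjoinRoot.root f ^ (Fintype.card Fq + 1)) = -2 * b)
      ↔ Multiset.card f.roots = 3)
    ∧ ((Algebra.trace Fq (AdjoinRoot f)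
        (AdjoinRoot.root f ^ (Fintype.card Fq + 1)) = b)
      ↔ Irreducible f)
    ∧ ((Algebra.trace Fq (AdjoinRoot f)
          (AdjoinRoot.root f ^ (Fintype.card Fq + 1)) ^ 3
        - 3 * b ^ 2 * Algebra.trace Fq (AdjoinRoot f)
            (AdjoinRoot.root f ^ (Fintype.card Fq + 1))
        - 2 * b ^ 3 - 27 * c ^ 2 = 0)
      ↔ Multiset.card f.roots = 1) := by
  have h3b : (3 : Fq) * b ≠ 0 := left_ne_zero_of_mul hcond
  have hdisc : (4 : Fq) * b ^ 3 + 27 * c ^ 2 ≠ 0 := right_ne_zero_of_mul hcond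
  set T := Algebra.trace Fq (AdjoinRoot f) (AdjoinRoot.root f ^ (Fintype.card Fq + 1)) with hT
  have tri := aux_tri b c f hf
  have key3 : Multiset.card f.roots = 3 → T = -2 * b := fun h => aux_case3 b c f hf hsep h
  have keyI : Irreducible f → T = b := fun h => aux_caseI b c f hf h
  have key1 : Multiset.card f.roots = 1 →
      T ^ 3 - 3 * b ^ 2 * T - 2 * b ^ 3 - 27 * c ^ 2 = 0 := by
    intro h
    obtain ⟨r, hr, hTr⟩ := aux_case1 b c f hf hsep h
    rw [hT, hTr]
    linear_combination (27 * (r ^ 3 + b * r - c)) * hr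
  have hne2b : (-2 : Fq) * b ≠ b := by
    intro h
    exact h3b (by linear_combination -h)
  have res2b : (-2 * b : Fq) ^ 3 - 3 * b ^ 2 * (-2 * b) - 2 * b ^ 3 - 27 * c ^ 2 ≠ 0 := by
    intro h
    exact hdisc (by linear_combination -h)
  have resb : (b : Fq) ^ 3 - 3 * b ^ 2 * b - 2 * b ^ 3 - 27 * c ^ 2 ≠ 0 := by
    intro h
    exact hdisc (by linear_combination -h)
  refine ⟨⟨fun h => ?_, key3⟩, ⟨fun h => ?_, keyI⟩, ⟨fun h => ?_, key1⟩⟩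
  · rcases tri with h3 | hI | h1
    · exact h3
    · exact (hne2b ((keyI hI).symm.trans h).symm).elim
    · have := key1 h1
      rw [h] at this
      exact absurd this res2b
  · rcases tri with h3 | hI | h1
    · rw [key3 h3] at h
      exact absurd h hne2b
    · exact hI
    · have := key1 h1
      rw [h] at this
      exact absurd this resb
  · rcases tri with h3 | hI | h1
    · rw [key3 h3] at h
      exact absurd h res2b
    · rw [keyI hI] at h
      exact absurd h resb
    · exact h1
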